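/- arXiv:1806.06001 — 8 statements merged into one kernel-verified Lean document; each statement's English description precedes it below -/
import Mathlib

section
/- Let X be a completely regular Hausdorff (T3.5) space. If player II has a winning strategy in the Rothberger game G1(O_X,O_X), then player II has a winning strategy in the ω-Rothberger game G1(Ω_X,Ω_X). -/
open Set Filter Topology

/-- The list `[a 0, …, a (n-1)]` of the first `n` moves of a play `a`. -/
def hist {α : Type*} (a : ℕ → α) (n : ℕ) : List α :=
  List.ofFn fun i : Fin n => a i

section SelectionGames

variable {M : Type*}

/-- The selection principle `S1(A,B)`. -/
def S1 (A B : Set (Set M)) : Prop :=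
  ∀ a : ℕ → Set M, (∀ n, a n ∈ A) →
    ∃ b : ℕ → M, (∀ n, b n ∈ a n) ∧ Set.range b ∈ B

/-- The selection principle `Sfin(A,B)`. -/
def Sfin (A B : Set (Set M)) : Prop :=
  ∀ a : ℕ → Set M, (∀ n, a n ∈ A) →
    ∃ b : ℕ → Set M, (∀ n, b n ⊆ a n ∧ (b n).Finite) ∧ (⋃ n, b n) ∈ B

/-- Player I has a winning predetermined strategy in the selection game `G1(A,B)`:
a sequence of moves `σ n ∈ A`, depending only on the round number, such that
no legal sequence of responses by II produces a member of `B`. -/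
def IPredetWinsG1 (A B : Set (Set M)) : Prop :=
  ∃ σ : ℕ → Set M, (∀ n, σ n ∈ A) ∧
    ∀ b : ℕ → M, (∀ n, b n ∈ σ n) → Set.range b ∉ B

/-- Player I has a winning predetermined strategy in the selection game `Gfin(A,B)`. -/
def IPredetWinsGfin (A B : Set (Set M)) : Prop :=
  ∃ σ : ℕ → Set M, (∀ n, σ n ∈ A) ∧
    ∀ b : ℕ → Set M, (∀ n, b n ⊆ σ n ∧ (b n).Finite) → (⋃ n, b n) ∉ B

/-- Player I has a winning (perfect-information) strategy in `G1(A,B)`: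
I's move in round `n` depends on II's previous moves `b 0, …, b (n-1)`. -/
def IWinsG1 (A B : Set (Set M)) : Prop :=
  ∃ σ : List M → Set M, (∀ h, σ h ∈ A) ∧
    ∀ b : ℕ → M, (∀ n, b n ∈ σ (hist b n)) → Set.range b ∉ B

/-- Player II has a winning (perfect-information) strategy in `G1(A,B)`:
II's move in round `n` depends on I's previous moves `a 0, …, a (n-1)`
together with I's current move `a n`; it is legal and always produces a member of `B`. -/
def IIWinsG1 (A B : Set (Set M)) : Prop :=
  ∃ σ : List (Set M) → Set M → M,
    ∀ a : ℕ → Set M, (∀ n, a n ∈ A) →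
      (∀ n, σ (hist a n) (a n) ∈ a n) ∧
      Set.range (fun n => σ (hist a n) (a n)) ∈ B

/-- Player II has a winning Markov strategy in `G1(A,B)`: II's move depends only on
I's current move and the round number. -/
def IIMarkovWinsG1 (A B : Set (Set M)) : Prop :=
  ∃ σ : Set M → ℕ → M,
    ∀ a : ℕ → Set M, (∀ n, a n ∈ A) →
      (∀ n, σ (a n) n ∈ a n) ∧
      Set.range (fun n => σ (a n) n) ∈ B

end SelectionGames

section TopologicalGames

variable {X : Type*}

/-- `𝒰` is an open cover of the space `X`. -/
def IsOpenCover [TopologicalSpace X] (𝒰 : Set (Set X)) : Prop :=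
  (∀ U ∈ 𝒰, IsOpen U) ∧ ⋃₀ 𝒰 = Set.univ

/-- `𝒰` is an ω-cover of `X`: an open cover such that every finite subset of `X`
is contained in a single member of `𝒰`. -/
def IsOmegaCover [TopologicalSpace X] (𝒰 : Set (Set X)) : Prop :=
  IsOpenCover 𝒰 ∧ ∀ F : Finset X, ∃ U ∈ 𝒰, ↑F ⊆ U

/-- `D` is a closed discrete subset of the space. -/
def IsClosedDiscrete [TopologicalSpace X] (D : Set X) : Prop :=
  IsClosed D ∧ ∀ x ∈ D, ∃ U : Set X, IsOpen U ∧ U ∩ D = {x}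

/-- Player I has a winning predetermined strategy in the point-open game `PO(X)`. -/
def IPredetWinsPO (X : Type*) [TopologicalSpace X] : Prop :=
  ∃ p : ℕ → X, ∀ U : ℕ → Set X,
    (∀ n, IsOpen (U n) ∧ p n ∈ U n) → (⋃ n, U n) = Set.univ

/-- Player II has a winning Markov strategy in the point-open game `PO(X)`. -/
def IIMarkovWinsPO (X : Type*) [TopologicalSpace X] : Prop :=
  ∃ σ : X → ℕ → Set X,
    (∀ x n, IsOpen (σ x n) ∧ x ∈ σ x n) ∧
    ∀ p : ℕ → X, (⋃ n, σ (p n) n) ≠ Set.univ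

/-- Player I has a winning predetermined strategy in the finite-open game `FO(X)`. -/
def IPredetWinsFO (X : Type*) [TopologicalSpace X] : Prop :=
  ∃ p : ℕ → Finset X, ∀ U : ℕ → Set X,
    (∀ n, IsOpen (U n) ∧ ↑(p n) ⊆ U n) → (⋃ n, U n) = Set.univ

/-- Player II has a winning Markov strategy in the finite-open game `FO(X)`. -/
def IIMarkovWinsFO (X : Type*) [TopologicalSpace X] : Prop :=
  ∃ σ : Finset X → ℕ → Set X,
    (∀ F n, IsOpen (σ F n) ∧ ↑F ⊆ σ F n) ∧
    ∀ F : ℕ → Finset X, (⋃ n, σ (F n) n) ≠ Set.univ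

/-- Player I has a winning predetermined strategy in the game `ΩFO(X)`. -/
def IPredetWinsOmegaFO (X : Type*) [TopologicalSpace X] : Prop :=
  ∃ p : ℕ → Finset X, ∀ U : ℕ → Set X,
    (∀ n, IsOpen (U n) ∧ ↑(p n) ⊆ U n) → IsOmegaCover (Set.range U)

/-- Player I has a winning (perfect-information) strategy in the game `ΩFO(X)`:
I's move in round `n` depends on II's previous moves `U 0, …, U (n-1)`. -/
def IWinsOmegaFO (X : Type*) [TopologicalSpace X] : Prop :=
  ∃ σ : List (Set X) → Finset X, ∀ U : ℕ → Set X,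
    (∀ n, IsOpen (U n) ∧ ↑(σ (hist U n)) ⊆ U n) → IsOmegaCover (Set.range U)

/-- Player II has a winning (perfect-information) strategy in the game `ΩFO(X)`:
II's move in round `n` depends on I's previous moves together with I's current move. -/
def IIWinsOmegaFO (X : Type*) [TopologicalSpace X] : Prop :=
  ∃ σ : List (Finset X) → Finset X → Set X,
    (∀ h F, IsOpen (σ h F) ∧ ↑F ⊆ σ h F) ∧
    ∀ F : ℕ → Finset X, ¬ IsOmegaCover (Set.range fun n => σ (hist F n) (F n))

/-- Player II has a winning Markov strategy in the game `ΩFO(X)`. -/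
def IIMarkovWinsOmegaFO (X : Type*) [TopologicalSpace X] : Prop :=
  ∃ σ : Finset X → ℕ → Set X,
    (∀ F n, IsOpen (σ F n) ∧ ↑F ⊆ σ F n) ∧
    ∀ F : ℕ → Finset X, ¬ IsOmegaCover (Set.range fun n => σ (F n) n)

/-- Player II has a winning tactic in the game `ΩPO(X)`: II's move depends only on
I's current move. -/
def IITacticWinsOmegaPO (X : Type*) [TopologicalSpace X] : Prop :=
  ∃ σ : X → Set X,
    (∀ x, IsOpen (σ x) ∧ x ∈ σ x) ∧
    ∀ p : ℕ → X, ¬ IsOmegaCover (Set.range fun n => σ (p n))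

/-- Player I has a winning (perfect-information) strategy in the discrete
selection game `CD(Y)`. -/
def IWinsCD (Y : Type*) [TopologicalSpace Y] : Prop :=
  ∃ σ : List Y → Set Y,
    (∀ h, IsOpen (σ h) ∧ (σ h).Nonempty) ∧
    ∀ y : ℕ → Y, (∀ n, y n ∈ σ (hist y n)) → ¬ IsClosedDiscrete (Set.range y)

/-- Player I has a winning predetermined strategy in the discrete selection game `CD(Y)`. -/
def IPredetWinsCD (Y : Type*) [TopologicalSpace Y] : Prop :=
  ∃ U : ℕ → Set Y, (∀ n, IsOpen (U n) ∧ (U n).Nonempty) ∧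
    ∀ y : ℕ → Y, (∀ n, y n ∈ U n) → ¬ IsClosedDiscrete (Set.range y)

/-- Player II has a winning (perfect-information) strategy in the discrete
selection game `CD(Y)`. -/
def IIWinsCD (Y : Type*) [TopologicalSpace Y] : Prop :=
  ∃ σ : List (Set Y) → Set Y → Y,
    ∀ U : ℕ → Set Y, (∀ n, IsOpen (U n) ∧ (U n).Nonempty) →
      (∀ n, σ (hist U n) (U n) ∈ U n) ∧
      IsClosedDiscrete (Set.range fun n => σ (hist U n) (U n))

/-- Player II has a winning Markov strategy in the discrete selection game `CD(Y)`. -/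
def IIMarkovWinsCD (Y : Type*) [TopologicalSpace Y] : Prop :=
  ∃ σ : Set Y → ℕ → Y,
    ∀ U : ℕ → Set Y, (∀ n, IsOpen (U n) ∧ (U n).Nonempty) →
      (∀ n, σ (U n) n ∈ U n) ∧
      IsClosedDiscrete (Set.range fun n => σ (U n) n)

/-- Player II has a winning (perfect-information) strategy in the closure game `CL(Y,x)`. -/
def IIWinsCL (Y : Type*) [TopologicalSpace Y] (x : Y) : Prop :=
  ∃ σ : List (Set Y) → Set Y → Y,
    ∀ U : ℕ → Set Y, (∀ n, IsOpen (U n) ∧ (U n).Nonempty) →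
      (∀ n, σ (hist U n) (U n) ∈ U n) ∧
      x ∉ closure (Set.range fun n => σ (hist U n) (U n))

/-- Player II has a winning Markov strategy in the closure game `CL(Y,x)`. -/
def IIMarkovWinsCL (Y : Type*) [TopologicalSpace Y] (x : Y) : Prop :=
  ∃ σ : Set Y → ℕ → Y,
    ∀ U : ℕ → Set Y, (∀ n, IsOpen (U n) ∧ (U n).Nonempty) →
      (∀ n, σ (U n) n ∈ U n) ∧
      x ∉ closure (Set.range fun n => σ (U n) n)

/-- Player II has a winning (perfect-information) strategy in Gruenhage's
clustering game at `x`. -/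
def IIWinsGruCluster (Y : Type*) [TopologicalSpace Y] (x : Y) : Prop :=
  ∃ σ : List (Set Y) → Set Y → Y,
    ∀ U : ℕ → Set Y, (∀ n, IsOpen (U n) ∧ x ∈ U n) →
      (∀ n, σ (hist U n) (U n) ∈ U n) ∧
      ¬ MapClusterPt x atTop (fun n => σ (hist U n) (U n))

/-- Player II has a winning Markov strategy in Gruenhage's clustering game at `x`. -/
def IIMarkovWinsGruCluster (Y : Type*) [TopologicalSpace Y] (x : Y) : Prop :=
  ∃ σ : Set Y → ℕ → Y,
    ∀ U : ℕ → Set Y, (∀ n, IsOpen (U n) ∧ x ∈ U n) →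
      (∀ n, σ (U n) n ∈ U n) ∧
      ¬ MapClusterPt x atTop (fun n => σ (U n) n)

/-- Player I has a winning predetermined strategy in Gruenhage's clustering game at `x`. -/
def IPredetWinsGruCluster (Y : Type*) [TopologicalSpace Y] (x : Y) : Prop :=
  ∃ U : ℕ → Set Y, (∀ n, IsOpen (U n) ∧ x ∈ U n) ∧
    ∀ y : ℕ → Y, (∀ n, y n ∈ U n) → MapClusterPt x atTop y

/-- Player I has a winning predetermined strategy in Gruenhage's W-game at `x`
(I wins when II's points converge to `x`). -/
def IPredetWinsGruW (Y : Type*) [TopologicalSpace Y] (x : Y) : Prop :=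
  ∃ U : ℕ → Set Y, (∀ n, IsOpen (U n) ∧ x ∈ U n) ∧
    ∀ y : ℕ → Y, (∀ n, y n ∈ U n) → Filter.Tendsto y atTop (𝓝 x)

end TopologicalGames

/-- `Cp X`: the continuous real-valued functions on `X` with the topology of
pointwise convergence (inherited from the product topology on `X → ℝ`). -/
def Cp (X : Type*) [TopologicalSpace X] : Type _ := {f : X → ℝ // Continuous f}

instance (X : Type*) [TopologicalSpace X] : TopologicalSpace (Cp X) :=
  inferInstanceAs (TopologicalSpace {f : X → ℝ // Continuous f})

/-- The constant zero function, as an element of `Cp X`. -/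
def Cp.zero (X : Type*) [TopologicalSpace X] : Cp X := ⟨fun _ => 0, continuous_const⟩

section helpers
variable {α : Type*}
lemma hist_length (a : ℕ → α) (n : ℕ) : (hist a n).length = n := by simp [hist]
lemma hist_getElem (a : ℕ → α) {n t : ℕ} (h : t < n) (h' : t < (hist a n).length) :
    (hist a n)[t] = a t := by simp [hist, List.getElem_ofFn]
lemma hist_succ (a : ℕ → α) (n : ℕ) : hist a (n + 1) = hist a n ++ [a n] := by
  rw [hist, List.ofFn_succ', List.concat_eq_append]
  simp [hist, Fin.coe_castSucc, Fin.val_last]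
lemma hist_getD (a : ℕ → α) {n t : ℕ} (h : t < n) (d : α) :
    (hist a n).getD t d = a t := by
  rw [List.getD_eq_getElem _ _ (by simpa [hist_length] using h)]
  exact hist_getElem a h _
lemma hist_take (a : ℕ → α) {i n : ℕ} (h : i ≤ n) : (hist a n).take i = hist a i := by
  apply List.ext_getElem
  · simp [hist_length]; omega
  · intro t h1 h2
    rw [List.getElem_take]
    rw [hist_getElem a (by simp [hist_length] at h2; omega)]
    rw [hist_getElem a (by simp [hist_length] at h2; omega)]
lemma hist_zero (a : ℕ → α) : hist a 0 = [] := by simp [hist]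
end helpers

section basics
variable {X : Type*} [TopologicalSpace X]

/-- junk cover -/
def JC (X : Type*) [TopologicalSpace X] : Set (Set X) := {Set.univ}

lemma isOpenCover_JC : IsOpenCover (JC X) := by
  constructor
  · rintro U rfl; exact isOpen_univ
  · simp [JC]

def Legal (l : List (Set (Set X))) : Prop := ∀ 𝒰 ∈ l, IsOpenCover 𝒰

lemma legal_nil : Legal ([] : List (Set (Set X))) := by intro 𝒰 h; simp at h

/-- if some family fails to be an open cover, the space is nonempty -/
lemma nonempty_of_not_isOpenCover {𝒰 : Set (Set X)} (h : ¬ IsOpenCover 𝒰) : Nonempty X := by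
  by_contra he
  rw [not_nonempty_iff] at he
  refine h ⟨fun U _ => ?_, ?_⟩
  · rw [Set.eq_empty_of_isEmpty U]; exact isOpen_empty
  · rw [Set.eq_empty_of_isEmpty (⋃₀ 𝒰), Set.eq_empty_of_isEmpty (Set.univ : Set X)]

variable (σ₀ : List (Set (Set X)) → Set (Set X) → Set X)

def WinH : Prop :=
  ∀ a : ℕ → Set (Set X), (∀ n, IsOpenCover (a n)) →
    (∀ n, σ₀ (hist a n) (a n) ∈ a n) ∧
    IsOpenCover (Set.range fun n => σ₀ (hist a n) (a n))

variable {σ₀}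

lemma mem_of_legal (H : WinH σ₀) {l : List (Set (Set X))} (hl : Legal l)
    {𝒲 : Set (Set X)} (h𝒲 : IsOpenCover 𝒲) : σ₀ l 𝒲 ∈ 𝒲 := by
  classical
  set a : ℕ → Set (Set X) := fun i => if h : i < l.length then l[i] else 𝒲 with ha
  have haL : ∀ n, IsOpenCover (a n) := by
    intro n
    by_cases h : n < l.length
    · simpa [ha, h] using hl _ (List.getElem_mem h)
    · simpa [ha, h] using h𝒲
  have hh : hist a l.length = l := by
    apply List.ext_getElem (by simp [hist_length])
    intro t h1 h2
    rw [hist_getElem a (by simpa [hist_length] using h1)]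
    simp [ha, (by simpa [hist_length] using h1 : t < l.length)]
  have := (H a haL).1 l.length
  rw [hh] at this
  simpa [ha] using this

lemma focal_spec (H : WinH σ₀) (l : List (Set (Set X))) :
    ∃ p : X, Legal l → ∀ U : Set X, IsOpen U → p ∈ U →
      ∃ 𝒲, IsOpenCover 𝒲 ∧ σ₀ l 𝒲 ⊆ U := by
  by_cases hl : Legal l
  · by_contra hno
    push_neg at hno
    choose U hUo hUp hUbad using fun p => (hno p).2
    have hc : IsOpenCover (Set.range U) := by
      constructor
      · rintro _ ⟨p, rfl⟩; exact hUo p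
      · apply subset_antisymm (subset_univ _)
        intro q _
        exact ⟨U q, ⟨q, rfl⟩, hUp q⟩
    obtain ⟨p, hp⟩ := mem_of_legal H hl hc
    exact hUbad p _ hc (hp ▸ subset_rfl)
  · obtain ⟨𝒰, _, h𝒰⟩ := by simpa [Legal] using hl
    obtain ⟨x⟩ := nonempty_of_not_isOpenCover h𝒰
    exact ⟨x, fun h => absurd h hl⟩

noncomputable def focal (H : WinH σ₀) (l : List (Set (Set X))) : X :=
  (focal_spec H l).choose

lemma focal_prop (H : WinH σ₀) {l : List (Set (Set X))} (hl : Legal l)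
    {U : Set X} (hU : IsOpen U) (hp : focal H l ∈ U) :
    ∃ 𝒲, IsOpenCover 𝒲 ∧ σ₀ l 𝒲 ⊆ U :=
  (focal_spec H l).choose_spec hl U hU hp

lemma w_spec (H : WinH σ₀) (l : List (Set (Set X))) (U : Set X) :
    ∃ 𝒲 : Set (Set X), (Legal l ∧ IsOpen U ∧ focal H l ∈ U) →
      (IsOpenCover 𝒲 ∧ σ₀ l 𝒲 ⊆ U) := by
  by_cases h : Legal l ∧ IsOpen U ∧ focal H l ∈ U
  · obtain ⟨𝒲, h1, h2⟩ := focal_prop H h.1 h.2.1 h.2.2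
    exact ⟨𝒲, fun _ => ⟨h1, h2⟩⟩
  · exact ⟨JC X, fun hh => absurd hh h⟩

noncomputable def wC (H : WinH σ₀) (l : List (Set (Set X))) (U : Set X) : Set (Set X) :=
  (w_spec H l U).choose

lemma wC_prop (H : WinH σ₀) {l : List (Set (Set X))} {U : Set X}
    (h1 : Legal l) (h2 : IsOpen U) (h3 : focal H l ∈ U) :
    IsOpenCover (wC H l U) ∧ σ₀ l (wC H l U) ⊆ U :=
  (w_spec H l U).choose_spec ⟨h1, h2, h3⟩

end basics

section construction
attribute [local instance] Classical.decEq Classical.propDecidable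
variable {X : Type*} [TopologicalSpace X] {σ₀ : List (Set (Set X)) → Set (Set X) → Set X}

/-- base level pick: a member of the current cover containing F -/
noncomputable def PiZero (F : Finset X) (l : List (Set (Set X))) : Set X :=
  if h0 : ∃ U ∈ l.getD (l.length - 1) (JC X), (F : Set X) ⊆ U then h0.choose else Set.univ

/-- one level of the fusion construction, given the previous-level local strategy `Pik`.
Output: (position of node spawned after `l`, pick at round `l.length - 1`). -/
noncomputable def Cfun (H : WinH σ₀) (Pik : Finset X → List (Set (Set X)) → Set X)
    (F : Finset X) (l : List (Set (Set X))) : List (Set (Set X)) × Set X :=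
  if hl : l.length = 0 then ([], Set.univ) else
    let n := l.length - 1
    let i := (Nat.unpair n).1
    let Np := (Cfun H Pik F (l.take i)).1
    let pk := Pik (insert (focal H Np) F)
      (List.ofFn fun j' : Fin ((Nat.unpair n).2 + 1) => l.getD (Nat.pair i j') (JC X))
    (Np ++ [wC H Np pk], pk)
termination_by l.length
decreasing_by
  simp only [List.length_take]
  have h1 : (Nat.unpair (l.length - 1)).1 ≤ l.length - 1 := Nat.unpair_left_le _
  omega

noncomputable def PiK (H : WinH σ₀) : ℕ → Finset X → List (Set (Set X)) → Set X
  | 0 => PiZero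
  | (k+1) => fun F l => (Cfun H (PiK H k) F l).2

end construction

section plumbing
attribute [local instance] Classical.decEq Classical.propDecidable
variable {X : Type*} [TopologicalSpace X] {σ₀ : List (Set (Set X)) → Set (Set X) → Set X}

lemma pair_le_pair_right {i j' j : ℕ} (h : j' ≤ j) : Nat.pair i j' ≤ Nat.pair i j := by
  rcases Nat.lt_or_ge j' j with h' | h'
  · exact le_of_lt (Nat.pair_lt_pair_right i h')
  · have : j' = j := le_antisymm h h'
    rw [this]

lemma inner_hist (b : ℕ → Set (Set X)) (n : ℕ) :
    (List.ofFn fun j' : Fin ((Nat.unpair n).2 + 1) =>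
      (hist b (n+1)).getD (Nat.pair (Nat.unpair n).1 j') (JC X)) =
    hist (fun j' => b (Nat.pair (Nat.unpair n).1 j')) ((Nat.unpair n).2 + 1) := by
  unfold hist
  congr 1
  funext j'
  have hle : Nat.pair (Nat.unpair n).1 ↑j' ≤ n := by
    calc Nat.pair (Nat.unpair n).1 ↑j' ≤ Nat.pair (Nat.unpair n).1 (Nat.unpair n).2 :=
          pair_le_pair_right (Nat.lt_succ_iff.mp j'.isLt)
      _ = n := Nat.pair_unpair n
  exact hist_getD b (Nat.lt_succ_of_le hle) _

lemma Cfun_hist (H : WinH σ₀) (Pik : Finset X → List (Set (Set X)) → Set X)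
    (F : Finset X) (b : ℕ → Set (Set X)) (n : ℕ) :
    Cfun H Pik F (hist b (n+1)) =
      ((Cfun H Pik F (hist b (Nat.unpair n).1)).1 ++
        [wC H (Cfun H Pik F (hist b (Nat.unpair n).1)).1
          (Pik (insert (focal H (Cfun H Pik F (hist b (Nat.unpair n).1)).1) F)
            (hist (fun j' => b (Nat.pair (Nat.unpair n).1 j')) ((Nat.unpair n).2 + 1)))],
       Pik (insert (focal H (Cfun H Pik F (hist b (Nat.unpair n).1)).1) F)
            (hist (fun j' => b (Nat.pair (Nat.unpair n).1 j')) ((Nat.unpair n).2 + 1))) := by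
  rw [Cfun]
  have h0 : ¬ (hist b (n+1)).length = 0 := by simp [hist_length]
  rw [dif_neg h0]
  have h1 : List.take (Nat.unpair ((hist b (n+1)).length - 1)).1 (hist b (n+1)) =
      hist b (Nat.unpair n).1 := by
    rw [hist_length]
    exact hist_take b (le_trans (Nat.unpair_left_le n) (Nat.le_succ n))
  have h2 : (List.ofFn fun i : Fin ((Nat.unpair ((hist b (n+1)).length - 1)).2 + 1) =>
      (hist b (n+1)).getD (Nat.pair (Nat.unpair ((hist b (n+1)).length - 1)).1 ↑i) (JC X)) =
      hist (fun j' => b (Nat.pair (Nat.unpair n).1 j')) ((Nat.unpair n).2 + 1) := by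
    have hn : (hist b (n+1)).length - 1 = n := by simp [hist_length]
    apply List.ext_getElem
    · simp [hist_length, hn]
    · intro t ht1 ht2
      simp only [List.getElem_ofFn]
      rw [hist_getElem _ (by simpa [hist_length, hn] using ht2)]
      simp only [hn]
      have hle : Nat.pair (Nat.unpair n).1 t ≤ n := by
        calc Nat.pair (Nat.unpair n).1 t ≤ Nat.pair (Nat.unpair n).1 (Nat.unpair n).2 :=
              pair_le_pair_right (by simp [hist_length, hn] at ht2; omega)
          _ = n := Nat.pair_unpair n
      exact hist_getD b (Nat.lt_succ_of_le hle) _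
  simp only []
  rw [h1, h2]

end plumbing

section nodes
attribute [local instance] Classical.decEq Classical.propDecidable
variable {X : Type*} [TopologicalSpace X] {σ₀ : List (Set (Set X)) → Set (Set X) → Set X}

/-- substream along the `i`-th fiber of the pairing -/
def subs {β : Type*} (b : ℕ → β) (i : ℕ) : ℕ → β := fun j' => b (Nat.pair i j')

/-- node positions of the level-(k+1) construction -/
noncomputable def NP (H : WinH σ₀) (k : ℕ) (F : Finset X) (b : ℕ → Set (Set X)) (i : ℕ) :
    List (Set (Set X)) := (Cfun H (PiK H k) F (hist b i)).1

/-- the enlarged relativizer at node `i` -/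
noncomputable def FiF (H : WinH σ₀) (k : ℕ) (F : Finset X) (b : ℕ → Set (Set X)) (i : ℕ) :
    Finset X := insert (focal H (NP H k F b i)) F

lemma NP_zero (H : WinH σ₀) (k : ℕ) (F : Finset X) (b : ℕ → Set (Set X)) :
    NP H k F b 0 = [] := by
  rw [NP, hist_zero, Cfun]
  simp

lemma NP_succ (H : WinH σ₀) (k : ℕ) (F : Finset X) (b : ℕ → Set (Set X)) (n : ℕ) :
    NP H k F b (n+1) = NP H k F b (Nat.unpair n).1 ++
      [wC H (NP H k F b (Nat.unpair n).1)
        (PiK H k (FiF H k F b (Nat.unpair n).1)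
          (hist (subs b (Nat.unpair n).1) ((Nat.unpair n).2 + 1)))] := by
  rw [NP, Cfun_hist]
  rfl

lemma PiK_succ_eq (H : WinH σ₀) (k : ℕ) (F : Finset X) (b : ℕ → Set (Set X)) (n : ℕ) :
    PiK H (k+1) F (hist b (n+1)) =
      PiK H k (FiF H k F b (Nat.unpair n).1)
        (hist (subs b (Nat.unpair n).1) ((Nat.unpair n).2 + 1)) := by
  show (Cfun H (PiK H k) F (hist b (n+1))).2 = _
  rw [Cfun_hist]
  rfl

end nodes

section verification
attribute [local instance] Classical.decEq Classical.propDecidable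
variable {X : Type*} [TopologicalSpace X] {σ₀ : List (Set (Set X)) → Set (Set X) → Set X}

lemma Ver (H : WinH σ₀) :
    ∀ (k : ℕ) (F : Finset X) (b : ℕ → Set (Set X)), (∀ n, IsOmegaCover (b n)) →
    (∀ n, PiK H k F (hist b (n+1)) ∈ b n ∧ (F : Set X) ⊆ PiK H k F (hist b (n+1))) ∧
    (∀ G : Finset X, G.card ≤ k →
      ∃ n, (G : Set X) ∪ (F : Set X) ⊆ PiK H k F (hist b (n+1))) := by
  intro k
  induction k with
  | zero =>
    intro F b hb
    have key : ∀ n, PiK H 0 F (hist b (n+1)) ∈ b n ∧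
        (F : Set X) ⊆ PiK H 0 F (hist b (n+1)) := by
      intro n
      have hcur : (hist b (n+1)).getD ((hist b (n+1)).length - 1) (JC X) = b n := by
        rw [hist_length]
        exact hist_getD b (by omega) _
      have hex : ∃ U ∈ (hist b (n+1)).getD ((hist b (n+1)).length - 1) (JC X),
          (F : Set X) ⊆ U := by
        rw [hcur]; exact (hb n).2 F
      show PiZero F (hist b (n+1)) ∈ b n ∧ (F : Set X) ⊆ PiZero F (hist b (n+1))
      rw [PiZero, dif_pos hex]
      obtain ⟨h1, h2⟩ := hex.choose_spec
      exact ⟨by rw [← hcur]; exact h1, h2⟩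
    refine ⟨key, ?_⟩
    intro G hG
    have hGe : G = ∅ := Finset.card_eq_zero.mp (le_antisymm hG (Nat.zero_le _))
    subst hGe
    exact ⟨0, by simpa using (key 0).2⟩
  | succ k IH =>
    intro F b hb
    have hsub : ∀ i n, IsOmegaCover (subs b i n) := fun i n => hb _
    -- conjunct 1
    have conj1 : ∀ n, PiK H (k+1) F (hist b (n+1)) ∈ b n ∧
        (F : Set X) ⊆ PiK H (k+1) F (hist b (n+1)) := by
      intro n
      rw [PiK_succ_eq]
      obtain ⟨h1, h2⟩ := (IH (FiF H k F b (Nat.unpair n).1) (subs b (Nat.unpair n).1)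
        (hsub _)).1 (Nat.unpair n).2
      constructor
      · have : subs b (Nat.unpair n).1 (Nat.unpair n).2 = b n := by
          rw [subs]; simp only [Nat.pair_unpair]
        rwa [this] at h1
      · refine subset_trans ?_ h2
        rw [FiF]
        simp only [Finset.coe_insert]
        exact subset_insert _ _
    -- openness and focal membership of picks, needed for wC side conditions
    have pickP : ∀ i j, PiK H k (FiF H k F b i) (hist (subs b i) (j+1)) ∈ b (Nat.pair i j) ∧
        ((FiF H k F b i : Finset X) : Set X) ⊆ PiK H k (FiF H k F b i) (hist (subs b i) (j+1)) :=
      fun i j => (IH (FiF H k F b i) (subs b i) (hsub _)).1 j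
    have pickOpen : ∀ i j, IsOpen (PiK H k (FiF H k F b i) (hist (subs b i) (j+1))) :=
      fun i j => (hb (Nat.pair i j)).1.1 _ (pickP i j).1
    have pickFocal : ∀ i j, focal H (NP H k F b i) ∈
        PiK H k (FiF H k F b i) (hist (subs b i) (j+1)) := by
      intro i j
      refine (pickP i j).2 ?_
      rw [FiF]
      simp only [Finset.coe_insert]
      exact Set.mem_insert _ _
    -- legality of node positions
    have NPlegal : ∀ i, Legal (NP H k F b i) := by
      intro i
      induction i using Nat.strong_induction_on with
      | _ i IH2 =>
        match i with
        | 0 => rw [NP_zero]; exact legal_nil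
        | (m+1) =>
          rw [NP_succ]
          intro 𝒰 hmem
          rcases List.mem_append.mp hmem with hold | hnew
          · exact IH2 (Nat.unpair m).1 (Nat.lt_succ_of_le (Nat.unpair_left_le m)) 𝒰 hold
          · rw [List.mem_singleton] at hnew
            subst hnew
            exact (wC_prop H (IH2 (Nat.unpair m).1 (Nat.lt_succ_of_le (Nat.unpair_left_le m)))
              (pickOpen _ _) (pickFocal _ _)).1
    refine ⟨conj1, ?_⟩
    -- conjunct 2
    intro G hG
    rcases G.eq_empty_or_nonempty with rfl | ⟨x, hx⟩
    · exact ⟨0, by simpa using (conj1 0).2⟩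
    · by_contra hno
      push_neg at hno
      set G' := G.erase x with hG'
      have hG'card : G'.card ≤ k := by
        rw [hG', Finset.card_erase_of_mem hx]
        omega
      -- Free predicate
      set Fr : List (Set (Set X)) → Prop :=
        fun l => ∀ t, t < l.length → x ∉ σ₀ (l.take t) (l.getD t (JC X)) with hFr
      -- the one-step descent
      have step : ∀ i, Fr (NP H k F b i) →
          ∃ m, Fr (NP H k F b m) ∧ ∃ 𝒲, NP H k F b m = NP H k F b i ++ [𝒲] := by
        intro i hFree
        obtain ⟨j, hj⟩ := (IH (FiF H k F b i) (subs b i) (hsub _)).2 G' hG'card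
        set Q := PiK H k (FiF H k F b i) (hist (subs b i) (j+1)) with hQ
        have hxQ : x ∉ Q := by
          intro hxQ
          apply hno (Nat.pair i j)
          rw [PiK_succ_eq]
          simp only [Nat.unpair_pair]
          rw [← hQ]
          rintro y (hy | hy)
          · rcases Finset.mem_coe.mp hy |> fun h => h with h
            by_cases hyx : y = x
            · subst hyx; exact hxQ
            · refine hj (Set.mem_union_left _ ?_)
              rw [hG']
              simp only [Finset.coe_erase, Set.mem_diff, Set.mem_singleton_iff]
              exact ⟨hy, hyx⟩
          · refine hj (Set.mem_union_right _ ?_)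
            have : (F : Set X) ⊆ ((FiF H k F b i : Finset X) : Set X) := by
              rw [FiF]; simp only [Finset.coe_insert]; exact subset_insert _ _
            exact this hy
        refine ⟨Nat.pair i j + 1, ?_, ?_⟩
        · -- freeness of the child node
          rw [NP_succ]
          simp only [Nat.unpair_pair]
          intro t ht
          rw [List.length_append, List.length_singleton] at ht
          rcases Nat.lt_or_ge t (NP H k F b i).length with ht' | ht'
          · rw [List.take_append_of_le_length (le_of_lt ht'),
              List.getD_append _ _ _ _ ht']
            exact hFree t ht'
          · have htEq : t = (NP H k F b i).length := by omega
            subst htEq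
            rw [List.take_left, List.getD_append_right _ _ _ _ le_rfl]
            simp only [Nat.sub_self, List.getD_cons_zero]
            intro hmem
            exact hxQ ((wC_prop H (NPlegal i) (pickOpen i j) (pickFocal i j)).2 hmem)
        · rw [NP_succ]
          simp only [Nat.unpair_pair]
          exact ⟨_, rfl⟩
      -- build the infinite descent
      have free0 : Fr (NP H k F b 0) := by
        rw [NP_zero]
        intro t ht
        simp at ht
      let g : ℕ → {i : ℕ // Fr (NP H k F b i)} := fun t =>
        Nat.rec ⟨0, free0⟩ (fun _ p => ⟨(step p.1 p.2).choose, (step p.1 p.2).choose_spec.1⟩) t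
      have gsucc : ∀ t, ∃ 𝒲, NP H k F b (g (t+1)).1 = NP H k F b (g t).1 ++ [𝒲] :=
        fun t => (step (g t).1 (g t).2).choose_spec.2
      set c : ℕ → Set (Set X) := fun t => (gsucc t).choose with hc
      have hcEq : ∀ t, NP H k F b (g (t+1)).1 = NP H k F b (g t).1 ++ [c t] :=
        fun t => (gsucc t).choose_spec
      have histc : ∀ t, hist c t = NP H k F b (g t).1 := by
        intro t
        induction t with
        | zero => rw [hist_zero]; exact (NP_zero H k F b).symm
        | succ t IHt => rw [hist_succ, IHt, ← hcEq]
      have legalc : ∀ t, IsOpenCover (c t) := by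
        intro t
        apply NPlegal (g (t+1)).1
        rw [hcEq t]
        exact List.mem_append.mpr (Or.inr (List.mem_singleton_self _))
      -- the strategy catches x somewhere along this legal play: contradiction
      obtain ⟨V, ⟨t, rfl⟩, hxV⟩ := by
        have := (H c legalc).2.2
        have hxmem : x ∈ ⋃₀ Set.range fun n => σ₀ (hist c n) (c n) := by
          rw [this]; trivial
        exact hxmem
      have hlen : (NP H k F b (g (t+1)).1).length = (NP H k F b (g t).1).length + 1 := by
        rw [hcEq t]; simp
      have hfree := (g (t+1)).2 (NP H k F b (g t).1).length (by omega)
      apply hfree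
      rw [hcEq t, List.take_left, List.getD_append_right _ _ _ _ le_rfl]
      simp only [Nat.sub_self, List.getD_cons_zero]
      have hxV' : x ∈ σ₀ (hist c t) (c t) := hxV
      rw [histc t] at hxV'
      exact hxV'

end verification

section final
attribute [local instance] Classical.decEq Classical.propDecidable
variable {X : Type*} [TopologicalSpace X] {σ₀ : List (Set (Set X)) → Set (Set X) → Set X}

/-- the final interleaved strategy -/
noncomputable def tauF (H : WinH σ₀) (l : List (Set (Set X))) (𝒰 : Set (Set X)) : Set X :=
  PiK H (Nat.unpair l.length).1 ∅
    (List.ofFn fun j' : Fin ((Nat.unpair l.length).2 + 1) =>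
      (l ++ [𝒰]).getD (Nat.pair (Nat.unpair l.length).1 j') (JC X))

lemma tauF_eq (H : WinH σ₀) (a : ℕ → Set (Set X)) (n : ℕ) :
    tauF H (hist a n) (a n) =
      PiK H (Nat.unpair n).1 ∅
        (hist (subs a (Nat.unpair n).1) ((Nat.unpair n).2 + 1)) := by
  have hlist : (List.ofFn fun j' : Fin ((Nat.unpair (hist a n).length).2 + 1) =>
      ((hist a n) ++ [a n]).getD (Nat.pair (Nat.unpair (hist a n).length).1 ↑j') (JC X)) =
      hist (subs a (Nat.unpair n).1) ((Nat.unpair n).2 + 1) := by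
    have hlen : (hist a n).length = n := hist_length a n
    apply List.ext_getElem
    · simp [hist_length, hlen]
    · intro t ht1 ht2
      simp only [List.getElem_ofFn]
      rw [← hist_succ, hist_getElem _ (by simpa [hist_length, hlen] using ht2)]
      simp only [hlen]
      have hle : Nat.pair (Nat.unpair n).1 t ≤ n := by
        calc Nat.pair (Nat.unpair n).1 t ≤ Nat.pair (Nat.unpair n).1 (Nat.unpair n).2 :=
              pair_le_pair_right (by simp [hist_length, hlen] at ht2; omega)
          _ = n := Nat.pair_unpair n
      rw [hist_getD a (Nat.lt_succ_of_le hle)]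
      rfl
  show PiK H (Nat.unpair (hist a n).length).1 ∅ _ = _
  rw [hlist, hist_length]

theorem main_aux (H : WinH σ₀) (a : ℕ → Set (Set X)) (ha : ∀ n, IsOmegaCover (a n)) :
    (∀ n, tauF H (hist a n) (a n) ∈ a n) ∧
    IsOmegaCover (Set.range fun n => tauF H (hist a n) (a n)) := by
  have hsubs : ∀ i j, IsOmegaCover (subs a i j) := fun i j => ha _
  have hleg : ∀ n, tauF H (hist a n) (a n) ∈ a n := by
    intro n
    rw [tauF_eq]
    have h1 := (Ver H (Nat.unpair n).1 ∅ (subs a (Nat.unpair n).1) (hsubs _)).1 (Nat.unpair n).2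
    have h2 : subs a (Nat.unpair n).1 (Nat.unpair n).2 = a n := by
      rw [subs]; simp only [Nat.pair_unpair]
    rw [← h2]
    exact h1.1
  have hG : ∀ G : Finset X, ∃ n, (G : Set X) ⊆ tauF H (hist a n) (a n) := by
    intro G
    obtain ⟨m, hm⟩ := (Ver H G.card ∅ (subs a G.card) (hsubs _)).2 G le_rfl
    refine ⟨Nat.pair G.card m, ?_⟩
    rw [tauF_eq]
    simp only [Nat.unpair_pair]
    intro y hy
    exact hm (Set.mem_union_left _ hy)
  refine ⟨hleg, ⟨?_, ?_⟩, ?_⟩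
  · rintro U ⟨n, rfl⟩
    exact (ha n).1.1 _ (hleg n)
  · apply subset_antisymm (Set.subset_univ _)
    intro y _
    obtain ⟨n, hn⟩ := hG {y}
    exact ⟨_, ⟨n, rfl⟩, hn (by simp)⟩
  · intro G
    obtain ⟨n, hn⟩ := hG G
    exact ⟨_, ⟨n, rfl⟩, hn⟩

end final


/-- For a T3.5 space `X`, if II has a winning strategy in the Rothberger
game `G1(O_X, O_X)`, then II has a winning strategy in the ω-Rothberger game
`G1(Ω_X, Ω_X)`. -/
theorem II_wins_rothberger_implies_II_wins_omega_rothberger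
    (X : Type*) [TopologicalSpace X] [T35Space X]
    (h : IIWinsG1 {𝒰 : Set (Set X) | IsOpenCover 𝒰} {𝒰 : Set (Set X) | IsOpenCover 𝒰}) :
    IIWinsG1 {𝒰 : Set (Set X) | IsOmegaCover 𝒰} {𝒰 : Set (Set X) | IsOmegaCover 𝒰} := by
  obtain ⟨σ₀, H⟩ := h
  have H' : WinH σ₀ := H
  refine ⟨tauF H', fun a ha => ?_⟩
  have := main_aux H' a ha
  exact ⟨this.1, this.2⟩
end

section
/- Let X be a topological space. Player II has a winning Markov strategy in the Rothberger game G1(O_X,O_X) if and only if player I has a winning predetermined strategy in the point-open game PO(X). -/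
open Set Filter Topology

/-- For a topological space `X`, II has a winning Markov strategy in the
Rothberger game `G1(O_X, O_X)` iff I has a winning predetermined strategy in the
point-open game `PO(X)`. -/
theorem II_markov_wins_rothberger_iff_I_predet_wins_PO
    (X : Type*) [TopologicalSpace X] :
    IIMarkovWinsG1 {𝒰 : Set (Set X) | IsOpenCover 𝒰} {𝒰 : Set (Set X) | IsOpenCover 𝒰} ↔
      IPredetWinsPO X := by

  constructor
  · rintro ⟨σ, hσ⟩
    have key : ∀ n : ℕ, ∃ x : X, ∀ V : Set X, IsOpen V → x ∈ V →
        ∃ 𝒰 : Set (Set X), IsOpenCover 𝒰 ∧ σ 𝒰 n ⊆ V := by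
      intro n
      by_contra h
      push_neg at h
      choose U hU hxU hbad using h
      have hcov : IsOpenCover (Set.range U) := by
        constructor
        · rintro _ ⟨x, rfl⟩; exact hU x
        · apply Set.eq_univ_of_univ_subset
          intro y _
          exact ⟨U y, ⟨y, rfl⟩, hxU y⟩
      have hmem := (hσ (fun _ => Set.range U) (fun _ => hcov)).1 n
      obtain ⟨x, hx⟩ := hmem
      exact hbad x (Set.range U) hcov (hx ▸ subset_rfl)
    choose p hp using key
    refine ⟨p, ?_⟩
    intro U hU
    have h2 : ∀ n, ∃ 𝒰, IsOpenCover 𝒰 ∧ σ 𝒰 n ⊆ U n := fun n =>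
      hp n (U n) (hU n).1 (hU n).2
    choose 𝒰 h𝒰 hsub using h2
    have hwin := (hσ 𝒰 h𝒰).2
    apply Set.eq_univ_of_univ_subset
    rw [← hwin.2]
    intro y hy
    obtain ⟨_, ⟨n, rfl⟩, hyn⟩ := hy
    exact Set.mem_iUnion.2 ⟨n, hsub n hyn⟩
  · rintro ⟨p, hp⟩
    classical
    refine ⟨fun 𝒰 n => if h : ∃ U ∈ 𝒰, p n ∈ U then h.choose else ∅, ?_⟩
    intro a ha
    have hex : ∀ n, ∃ U ∈ a n, p n ∈ U := by
      intro n
      have : p n ∈ ⋃₀ a n := (ha n).2 ▸ Set.mem_univ _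
      obtain ⟨U, hU, hpU⟩ := this
      exact ⟨U, hU, hpU⟩
    have hmem : ∀ n, (if h : ∃ U ∈ a n, p n ∈ U then h.choose else ∅) ∈ a n ∧
        p n ∈ (if h : ∃ U ∈ a n, p n ∈ U then h.choose else ∅) := by
      intro n
      rw [dif_pos (hex n)]
      exact ⟨(hex n).choose_spec.1, (hex n).choose_spec.2⟩
    refine ⟨fun n => (hmem n).1, ?_, ?_⟩
    · rintro _ ⟨n, rfl⟩
      exact (ha n).1 _ (hmem n).1
    · apply Set.eq_univ_of_univ_subset
      have := hp (fun n => if h : ∃ U ∈ a n, p n ∈ U then h.choose else ∅)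
        (fun n => ⟨(ha n).1 _ (hmem n).1, (hmem n).2⟩)
      rw [← this]
      intro y hy
      obtain ⟨_, ⟨n, rfl⟩, hyn⟩ := hy
      exact ⟨_, ⟨n, rfl⟩, hyn⟩
end

section
/- Let X be a completely regular Hausdorff (T3.5) space. The following are equivalent: (i) X is countable; (ii) player I has a winning predetermined strategy in the finite-open game FO(X); (iii) player I has a winning predetermined strategy in the game ΩFO(X). -/
open Set Filter Topology

/-- For a T3.5 space `X`, the following are equivalent:
(i) `X` is countable; (ii) I has a winning predetermined strategy in `FO(X)`;
(iii) I has a winning predetermined strategy in `ΩFO(X)`. -/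
theorem countable_tfae_I_predet_wins_FO_omegaFO
    (X : Type*) [TopologicalSpace X] [T35Space X] :
    [Countable X, IPredetWinsFO X, IPredetWinsOmegaFO X].TFAE := by
  tfae_have 1 → 3 := by
    intro hc
    have : Countable (Finset X) := inferInstance
    obtain ⟨f, hf⟩ := exists_surjective_nat (Finset X)
    refine ⟨f, fun U hU => ⟨⟨fun V hV => ?_, ?_⟩, fun F => ?_⟩⟩
    · obtain ⟨n, rfl⟩ := hV
      exact (hU n).1
    · apply Set.eq_univ_of_forall
      intro x
      obtain ⟨n, hn⟩ := hf {x}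
      exact ⟨U n, ⟨n, rfl⟩, (hU n).2 (by rw [hn]; simp)⟩
    · obtain ⟨n, hn⟩ := hf F
      exact ⟨U n, ⟨n, rfl⟩, hn ▸ (hU n).2⟩
  tfae_have 3 → 2 := by
    rintro ⟨p, hp⟩
    refine ⟨p, fun U hU => ?_⟩
    have h := (hp U hU).1.2
    rwa [Set.sUnion_range] at h
  tfae_have 2 → 1 := by
    rintro ⟨p, hp⟩
    have hS : (⋃ n, (↑(p n) : Set X)) = Set.univ := by
      apply Set.eq_univ_of_forall
      intro x
      by_contra hx
      have hx' : ∀ n, x ∉ (↑(p n) : Set X) := by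
        intro n hn; exact hx (Set.mem_iUnion.mpr ⟨n, hn⟩)
      have := hp (fun _ => ({x}ᶜ : Set X)) (fun n =>
        ⟨isClosed_singleton.isOpen_compl, fun y hy hyx => hx' n (by
          simp only [Set.mem_singleton_iff] at hyx; rwa [← hyx])⟩)
      have hxu : x ∈ ⋃ _ : ℕ, ({x}ᶜ : Set X) := this ▸ Set.mem_univ x
      simp at hxu
    have : (Set.univ : Set X).Countable := by
      rw [← hS]
      exact Set.countable_iUnion fun n => (p n).finite_toSet.countable
    exact Set.countable_univ_iff.mp this
  tfae_finish
end

section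
/- Let X be a completely regular Hausdorff (T3.5) space. Player I has a winning predetermined strategy in Gruenhage's W-game on Cp(X) at the point 0 if and only if player I has a winning predetermined strategy in Gruenhage's clustering game on Cp(X) at the point 0. -/
open Set Filter Topology

lemma Cp.basic_open {X : Type*} [TopologicalSpace X] (F : Finset X) {ε : ℝ} (hε : 0 < ε) :
    IsOpen {f : Cp X | ∀ x ∈ F, |f.1 x| < ε} ∧ Cp.zero X ∈ {f : Cp X | ∀ x ∈ F, |f.1 x| < ε} := by
  constructor
  · have : {f : Cp X | ∀ x ∈ F, |f.1 x| < ε} = ⋂ x ∈ F, {f : Cp X | |f.1 x| < ε} := by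
      ext f; simp
    rw [this]
    refine isOpen_biInter_finset fun x _ => ?_
    have hc : Continuous fun f : Cp X => |f.1 x| :=
      ((continuous_apply x).comp continuous_subtype_val).abs
    exact isOpen_lt hc continuous_const
  · intro x _; simpa [Cp.zero] using hε

lemma Cp.exists_basic {X : Type*} [TopologicalSpace X] {U : Set (Cp X)}
    (hU : IsOpen U) (h0 : Cp.zero X ∈ U) :
    ∃ (F : Finset X) (ε : ℝ), 0 < ε ∧ {f : Cp X | ∀ x ∈ F, |f.1 x| < ε} ⊆ U := by
  replace hU := isOpen_induced_iff.1 hU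
  obtain ⟨W, hW, rfl⟩ := hU
  have h0W : (fun _ : X => (0 : ℝ)) ∈ W := h0
  obtain ⟨I, u, hu, hsub⟩ := isOpen_pi_iff.1 hW _ h0W
  choose δ hδ hball using fun a (ha : a ∈ I) =>
    Metric.isOpen_iff.1 (hu a ha).1 0 (hu a ha).2
  have hε : ∃ ε : ℝ, 0 < ε ∧ ∀ a (ha : a ∈ I), Metric.ball (0:ℝ) ε ⊆ u a := by
    rcases I.eq_empty_or_nonempty with h | h
    · exact ⟨1, one_pos, fun a ha => absurd ha (by simp [h])⟩
    · have hne : I.attach.Nonempty := by simpa using h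
      refine ⟨I.attach.inf' hne fun a => δ a.1 a.2, ?_, ?_⟩
      · rw [Finset.lt_inf'_iff]
        exact fun a _ => hδ a.1 a.2
      · intro a ha
        exact (Metric.ball_subset_ball
          (Finset.inf'_le _ (I.mem_attach ⟨a, ha⟩))).trans (hball a ha)
  obtain ⟨ε, hε0, hεb⟩ := hε
  refine ⟨I, ε, hε0, fun f hf => ?_⟩
  apply hsub
  intro a ha
  apply hεb a ha
  simpa [Metric.mem_ball, Real.dist_eq] using hf a ha

/-- For a T3.5 space `X`, I has a winning predetermined strategy in
Gruenhage's W-game on `Cp(X)` at `0` iff I has a winning predetermined strategy in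
Gruenhage's clustering game on `Cp(X)` at `0`. -/
theorem I_predet_wins_gruW_iff_I_predet_wins_gruCluster
    (X : Type*) [TopologicalSpace X] [T35Space X] :
    IPredetWinsGruW (Cp X) (Cp.zero X) ↔ IPredetWinsGruCluster (Cp X) (Cp.zero X) := by
  constructor
  · rintro ⟨U, hU, hwin⟩
    exact ⟨U, hU, fun y hy => (hwin y hy).mapClusterPt⟩
  · rintro ⟨U, hU, hwin⟩
    choose F ε hε hsub using fun n => Cp.exists_basic (hU n).1 (hU n).2
    set V : ℕ → Set (Cp X) := fun n =>
      ⋂ k ∈ Finset.range (n + 1), {f : Cp X | ∀ x ∈ F k, |f.1 x| < ε k} with hV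
    refine ⟨V, fun n => ?_, fun y hy => ?_⟩
    · constructor
      · exact isOpen_biInter_finset fun k _ => (Cp.basic_open (F k) (hε k)).1
      · exact Set.mem_biInter fun k _ => (Cp.basic_open (F k) (hε k)).2
    · by_contra hT
      obtain ⟨N, hN, hfreq⟩ := not_tendsto_iff_exists_frequently_notMem.1 hT
      obtain ⟨W0, hW0N, hW0o, h0W0⟩ := mem_nhds_iff.1 hN
      obtain ⟨F', ε', hε', hS⟩ := Cp.exists_basic hW0o h0W0
      obtain ⟨φ, hφ, hφN⟩ := extraction_of_frequently_atTop hfreq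
      set b : ℕ → Cp X := fun k => y (φ k) with hb
      have hbl : ∀ k, b k ∈ U k := by
        intro k
        apply hsub k
        have := hy (φ k)
        rw [hV] at this
        exact Set.mem_iInter₂.1 this k (Finset.mem_range.2 (Nat.lt_succ_of_le hφ.le_apply))
      have hcl := hwin b hbl
      have hSnhds : {f : Cp X | ∀ x ∈ F', |f.1 x| < ε'} ∈ 𝓝 (Cp.zero X) :=
        (Cp.basic_open F' hε').1.mem_nhds (Cp.basic_open F' hε').2
      obtain ⟨k, hk⟩ := (mapClusterPt_iff_frequently.1 hcl _ hSnhds).exists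
      exact hφN k (hW0N (hS hk))
end

section
/- Let X be a topological space. If player I has a winning predetermined strategy in the ω-Rothberger game G1(Ω_X,Ω_X), then player II has a winning Markov strategy in the game ΩFO(X). -/
open Set Filter Topology

/-- For a topological space `X`, if I has a winning predetermined
strategy in the ω-Rothberger game `G1(Ω_X, Ω_X)`, then II has a winning Markov
strategy in `ΩFO(X)`. -/
theorem I_predet_wins_omega_rothberger_implies_II_markov_wins_omegaFO
    (X : Type*) [TopologicalSpace X]
    (h : IPredetWinsG1 {𝒰 : Set (Set X) | IsOmegaCover 𝒰} {𝒰 : Set (Set X) | IsOmegaCover 𝒰}) :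
    IIMarkovWinsOmegaFO X := by
  obtain ⟨σ, hσ, hwin⟩ := h
  choose τ hτmem hτsub using fun n (F : Finset X) => (hσ n).2 F
  refine ⟨fun F n => τ n F, fun F n => ⟨(hσ n).1.1 _ (hτmem n F), hτsub n F⟩, ?_⟩
  intro F hcov
  exact hwin (fun n => τ n (F n)) (fun n => hτmem n (F n)) hcov
end

section
/- Let X be a topological space and x ∈ X. Then each of the following implies the next: (a) player I has a winning strategy in the selection game G1(D_X, Ω_{X,x}); (b) player II has a winning strategy in the closure game CL(X,x); (c) player II has a winning strategy in Gruenhage's clustering game at x; (d) player I has a winning strategy in the selection game G1(Ω_{X,x}, Ω_{X,x}). -/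
open Set Filter Topology

section PPProof

namespace PP


lemma length_hist {α : Type*} (a : ℕ → α) (n : ℕ) : (hist a n).length = n := by
  simp [hist]

open Classical in
noncomputable def pick {α : Type*} (x : α) (A : Set α) : α :=
  if h : A.Nonempty then h.choose else x

open Classical in
lemma pick_mem {α : Type*} (x : α) {A : Set α} (h : A.Nonempty) : pick x A ∈ A := by
  rw [pick, dif_pos h]; exact h.choose_spec

noncomputable def bseq {α : Type*} (x : α) (s : List α → Set α) (U : ℕ → Set α) : ℕ → α
  | n => pick x (s (List.ofFn fun i : Fin n => bseq x s U i) ∩ U n)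
  decreasing_by exact i.isLt

lemma bseq_congr {α : Type*} (x : α) (s : List α → Set α) {U V : ℕ → Set α} :
    ∀ n, (∀ i, i ≤ n → U i = V i) → bseq x s U n = bseq x s V n := by
  intro n
  induction n using Nat.strong_induction_on with
  | _ n ih =>
    intro h
    rw [bseq, bseq]
    have hL : (List.ofFn fun i : Fin n => bseq x s U i)
        = (List.ofFn fun i : Fin n => bseq x s V i) := by
      congr 1
      funext i
      exact ih i i.isLt fun j hj => h j (le_trans hj (le_of_lt i.isLt))
    rw [hL, h n le_rfl]



lemma hist_eq {α : Type*} (a : ℕ → α) (l : List α) (d : α) (n : ℕ) (hn : n = l.length)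
    (h : ∀ i, i < l.length → a i = l.getD i d) : hist a n = l := by
  subst hn
  apply List.ext_getElem (by simp [hist])
  intro i h1 h2
  simp only [hist, List.getElem_ofFn]
  rw [h i h2, List.getD_eq_getElem l d h2]

variable {X : Type*} [TopologicalSpace X]

/-- The winning property of II's strategy in Gruenhage's clustering game. -/
def Win (x : X) (σ : List (Set X) → Set X → X) : Prop :=
  ∀ U : ℕ → Set X, (∀ n, IsOpen (U n) ∧ x ∈ U n) →
    (∀ n, σ (hist U n) (U n) ∈ U n) ∧
    ¬ MapClusterPt x atTop (fun n => σ (hist U n) (U n))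

open Classical in
noncomputable def kf (x : X) (σ : List (Set X) → Set X → X) (t : List (Set X)) (V : Set X) : ℕ :=
  if h : ∃ k, x ∉ closure {σ (t ++ List.replicate k V) V} then Nat.find h else 0

noncomputable def resp (x : X) (σ : List (Set X) → Set X → X) (t : List (Set X)) (V : Set X) : X :=
  σ (t ++ List.replicate (kf x σ t V) V) V

noncomputable def nxt (x : X) (σ : List (Set X) → Set X → X) (t : List (Set X)) (V : Set X) :
    List (Set X) :=
  t ++ List.replicate (kf x σ t V + 1) V

open Classical in
noncomputable def upick (x : X) (σ : List (Set X) → Set X → X) (t : List (Set X)) (y : X) :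
    Set X :=
  if h : ∃ U, (IsOpen U ∧ x ∈ U) ∧ resp x σ t U = y then h.choose else Set.univ

noncomputable def simT (x : X) (σ : List (Set X) → Set X → X) (b : ℕ → X) : ℕ → List (Set X)
  | 0 => []
  | n + 1 => nxt x σ (simT x σ b n) (upick x σ (simT x σ b n) (b n))

noncomputable def Istrat (x : X) (σ : List (Set X) → Set X → X) (h : List X) : Set X :=
  (fun U => resp x σ (simT x σ (fun k => h.getD k x) h.length) U) '' {U | IsOpen U ∧ x ∈ U}

/-- Constant-tail extension of a finite history. -/
def extW (t : List (Set X)) (V : Set X) : ℕ → Set X :=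
  fun m => if m < t.length then t.getD m Set.univ else V

variable {x : X} {σ : List (Set X) → Set X → X}

lemma extW_legal {t : List (Set X)} (ht : ∀ s ∈ t, IsOpen s ∧ x ∈ s)
    {V : Set X} (hV : IsOpen V) (hxV : x ∈ V) :
    ∀ m, IsOpen (extW t V m) ∧ x ∈ extW t V m := by
  intro m
  by_cases h : m < t.length
  · simp only [extW, if_pos h]
    rw [List.getD_eq_getElem t Set.univ h]
    exact ht _ (List.getElem_mem h)
  · simp only [extW, if_neg h]
    exact ⟨hV, hxV⟩

lemma extW_val (t : List (Set X)) (V : Set X) {n : ℕ} (hn : t.length ≤ n) :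
    extW t V n = V := by
  simp only [extW, if_neg (by omega : ¬ n < t.length)]

lemma extW_hist (t : List (Set X)) (V : Set X) {n : ℕ} (hn : t.length ≤ n) :
    hist (extW t V) n = t ++ List.replicate (n - t.length) V := by
  apply hist_eq _ _ Set.univ _ (by simp; omega)
  intro i hi
  simp only [List.length_append, List.length_replicate] at hi
  by_cases h : i < t.length
  · simp only [extW, if_pos h]
    rw [List.getD_eq_getElem _ _ h,
      List.getD_eq_getElem _ _ (by simp only [List.length_append, List.length_replicate]; omega),
      List.getElem_append_left h]
  · simp only [extW, if_neg h]
    rw [List.getD_eq_getElem _ _ (by simp only [List.length_append, List.length_replicate]; omega),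
      List.getElem_append_right (Nat.le_of_not_lt h), List.getElem_replicate]

lemma sigma_mem (hw : Win x σ) {t : List (Set X)} (ht : ∀ s ∈ t, IsOpen s ∧ x ∈ s)
    {V : Set X} (hV : IsOpen V) (hxV : x ∈ V) (k : ℕ) :
    σ (t ++ List.replicate k V) V ∈ V := by
  obtain ⟨h1, _⟩ := hw (extW t V) (extW_legal ht hV hxV)
  have := h1 (t.length + k)
  rwa [extW_hist t V (by omega), extW_val t V (by omega),
    (by omega : t.length + k - t.length = k)] at this

open Classical in
lemma kf_spec (hw : Win x σ) {t : List (Set X)} (ht : ∀ s ∈ t, IsOpen s ∧ x ∈ s)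
    {V : Set X} (hV : IsOpen V) (hxV : x ∈ V) :
    resp x σ t V ∈ V ∧ x ∉ closure {resp x σ t V} := by
  have hex : ∃ k, x ∉ closure {σ (t ++ List.replicate k V) V} := by
    by_contra hcon
    push_neg at hcon
    obtain ⟨_, h2⟩ := hw (extW t V) (extW_legal ht hV hxV)
    apply h2
    rw [mapClusterPt_iff_frequently]
    intro s hs
    obtain ⟨o, hos, ho, hxo⟩ := mem_nhds_iff.mp hs
    rw [Filter.frequently_atTop]
    intro a
    refine ⟨max a t.length, le_max_left _ _, hos ?_⟩
    have hn : t.length ≤ max a t.length := le_max_right _ _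
    rw [extW_hist t V hn, extW_val t V hn]
    have := hcon (max a t.length - t.length)
    rw [mem_closure_iff] at this
    obtain ⟨y, hy1, hy2⟩ := this o ho hxo
    rw [Set.mem_singleton_iff] at hy2
    rwa [hy2] at hy1
  rw [resp, kf, dif_pos hex]
  exact ⟨sigma_mem hw ht hV hxV _, Nat.find_spec hex⟩

lemma simT_good (b : ℕ → X) : ∀ n, ∀ s ∈ simT x σ b n, IsOpen s ∧ x ∈ s := by
  intro n
  induction n with
  | zero => simp [simT]
  | succ n ih =>
    intro s hs
    rw [simT, nxt, List.mem_append] at hs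
    rcases hs with hs | hs
    · exact ih s hs
    · rw [List.eq_of_mem_replicate hs, upick]
      split
      · rename_i h
        exact h.choose_spec.1
      · simp


lemma simT_congr {b c : ℕ → X} : ∀ n, (∀ i, i < n → b i = c i) →
    simT x σ b n = simT x σ c n := by
  intro n
  induction n with
  | zero => simp [simT]
  | succ n ih =>
    intro h
    rw [simT, simT, ih (fun i hi => h i (by omega)), h n (by omega)]

lemma simT_len (b : ℕ → X) : ∀ n, n ≤ (simT x σ b n).length := by
  intro n
  induction n with
  | zero => simp
  | succ n ih =>
    rw [simT, nxt]
    simp only [List.length_append, List.length_replicate]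
    omega

lemma simT_prefix (b : ℕ → X) {m n : ℕ} (h : m ≤ n) : simT x σ b m <+: simT x σ b n := by
  induction n with
  | zero => rw [Nat.le_zero.mp h]
  | succ n ih =>
    rcases Nat.lt_or_ge m (n+1) with h' | h'
    · exact (ih (by omega)).trans (by rw [simT, nxt]; exact List.prefix_append _ _)
    · rw [Nat.le_antisymm h h']

end PP

/-- For a topological space `X` and `x ∈ X`, each of the following
implies the next: (a) I has a winning strategy in `G1(D_X, Ω_{X,x})`;
(b) II has a winning strategy in the closure game `CL(X,x)`;
(c) II has a winning strategy in Gruenhage's clustering game at `x`;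
(d) I has a winning strategy in `G1(Ω_{X,x}, Ω_{X,x})`. -/
theorem point_picking_implication_chain
    (X : Type*) [TopologicalSpace X] (x : X) :
    (IWinsG1 {D : Set X | Dense D} {A : Set X | x ∈ closure A} → IIWinsCL X x) ∧
    (IIWinsCL X x → IIWinsGruCluster X x) ∧
    (IIWinsGruCluster X x →
      IWinsG1 {A : Set X | x ∈ closure A} {A : Set X | x ∈ closure A}) := by
  refine ⟨?_, ?_, ?_⟩
  · -- (a) → (b)
    rintro ⟨s, hsD, hswin⟩
    refine ⟨fun h U => PP.bseq x s (fun k => if k < h.length then h.getD k ∅ else U) h.length, ?_⟩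
    intro U hU
    set b : ℕ → X := fun n => PP.bseq x s U n with hbdef
    have hb : ∀ n, PP.bseq x s
        (fun k => if k < (hist U n).length then (hist U n).getD k ∅ else U n)
        (hist U n).length = b n := by
      intro n
      rw [PP.length_hist]
      apply PP.bseq_congr
      intro i hi
      rcases Nat.lt_or_ge i n with h | h
      · rw [if_pos h, List.getD_eq_getElem _ _ (by simp [hist, h])]
        simp [hist]
      · rw [if_neg (by omega)]
        have hin : i = n := le_antisymm hi h
        rw [hin]
    have hmem : ∀ n, b n ∈ s (hist b n) ∩ U n := by
      intro n
      have hne : (s (hist b n) ∩ U n).Nonempty := by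
        have := (hsD (hist b n))
        rw [Set.mem_setOf_eq] at this
        have h2 := this.inter_open_nonempty (U n) (hU n).1 (hU n).2
        rwa [Set.inter_comm] at h2
      have : b n = PP.pick x (s (hist b n) ∩ U n) := by
        rw [hbdef]
        show PP.bseq x s U n = _
        rw [PP.bseq]
        rfl
      rw [this]
      exact PP.pick_mem x hne
    constructor
    · intro n
      show PP.bseq x s
        (fun k => if k < (hist U n).length then (hist U n).getD k ∅ else U n)
        (hist U n).length ∈ U n
      rw [hb n]
      exact (hmem n).2
    · show x ∉ closure (Set.range fun n => PP.bseq x s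
        (fun k => if k < (hist U n).length then (hist U n).getD k ∅ else U n)
        (hist U n).length)
      have hr : (Set.range fun n => PP.bseq x s
          (fun k => if k < (hist U n).length then (hist U n).getD k ∅ else U n)
          (hist U n).length) = Set.range b :=
        congrArg Set.range (funext hb)
      rw [hr]
      exact hswin b (fun n => (hmem n).1)
  · -- (b) → (c)
    rintro ⟨τ, hτ⟩
    refine ⟨τ, fun U hU => ?_⟩
    obtain ⟨h1, h2⟩ := hτ U (fun n => ⟨(hU n).1, ⟨x, (hU n).2⟩⟩)
    refine ⟨h1, fun hc => h2 ?_⟩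
    rw [mapClusterPt_iff_frequently] at hc
    rw [mem_closure_iff]
    intro o ho hxo
    obtain ⟨n, hn⟩ := (hc o (ho.mem_nhds hxo)).exists
    exact ⟨_, hn, Set.mem_range_self n⟩
  · -- (c) → (d)
    rintro ⟨σ, hσ⟩
    have hw : PP.Win x σ := hσ
    refine ⟨PP.Istrat x σ, ?_, ?_⟩
    · intro h
      rw [Set.mem_setOf_eq, mem_closure_iff]
      intro o ho hxo
      exact ⟨PP.resp x σ (PP.simT x σ (fun k => h.getD k x) h.length) o,
        (PP.kf_spec hw (PP.simT_good _ _) ho hxo).1, ⟨o, ⟨ho, hxo⟩, rfl⟩⟩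
    · intro b hb hcl
      rw [Set.mem_setOf_eq] at hcl
      set t : ℕ → List (Set X) := fun n => PP.simT x σ b n with htdef
      have hex : ∀ n, ∃ U, (IsOpen U ∧ x ∈ U) ∧ PP.resp x σ (t n) U = b n := by
        intro n
        have := hb n
        simp only [PP.Istrat, Set.mem_image, Set.mem_setOf_eq, PP.length_hist] at this
        obtain ⟨U, hU1, hU2⟩ := this
        refine ⟨U, hU1, ?_⟩
        rwa [show PP.simT x σ (fun k => (hist b n).getD k x) n = PP.simT x σ b n from
          PP.simT_congr n (fun i hi => by
            show (hist b n).getD i x = b i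
            rw [List.getD_eq_getElem _ _ (by simp [hist, hi])]
            simp [hist])] at hU2
      set U : ℕ → Set X := fun n => PP.upick x σ (t n) (b n) with hUdef
      have hUspec : ∀ n, (IsOpen (U n) ∧ x ∈ U n) ∧ PP.resp x σ (t n) (U n) = b n := by
        intro n
        have : U n = (hex n).choose := by
          rw [hUdef]
          exact dif_pos (hex n)
        rw [this]
        exact (hex n).choose_spec
      have hbK : ∀ n, x ∉ closure {b n} := by
        intro n
        rw [← (hUspec n).2]
        exact (PP.kf_spec hw (PP.simT_good _ _) (hUspec n).1.1 (hUspec n).1.2).2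
      have ht1 : ∀ n, t (n+1) = t n ++ List.replicate (PP.kf x σ (t n) (U n) + 1) (U n) :=
        fun n => rfl
      -- the full simulated play
      set W : ℕ → Set X := fun m => (t (m+1)).getD m Set.univ with hWdef
      have hWeq : ∀ {n m : ℕ}, m < (t n).length → W m = (t n).getD m Set.univ := by
        intro n m hm
        have h1 : m < (t (m+1)).length := lt_of_lt_of_le (Nat.lt_succ_self m) (PP.simT_len b (m+1))
        show (t (m+1)).getD m Set.univ = (t n).getD m Set.univ
        rw [List.getD_eq_getElem _ _ h1, List.getD_eq_getElem _ _ hm]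
        rcases le_total n (m+1) with h | h
        · exact ((PP.simT_prefix b h).getElem hm).symm
        · exact (PP.simT_prefix b h).getElem h1
      have hWleg : ∀ m, IsOpen (W m) ∧ x ∈ W m := by
        intro m
        have h1 : m < (t (m+1)).length := lt_of_lt_of_le (Nat.lt_succ_self m) (PP.simT_len b (m+1))
        show IsOpen ((t (m+1)).getD m Set.univ) ∧ x ∈ (t (m+1)).getD m Set.univ
        rw [List.getD_eq_getElem _ _ h1]
        exact PP.simT_good b (m+1) _ (List.getElem_mem h1)
      obtain ⟨_, hnc⟩ := hw W hWleg
      have hkey : ∀ n, b n = σ (hist W ((t n).length + PP.kf x σ (t n) (U n)))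
          (W ((t n).length + PP.kf x σ (t n) (U n))) := by
        intro n
        set k := PP.kf x σ (t n) (U n) with hkdef
        have hlen1 : (t (n+1)).length = (t n).length + k + 1 := by
          rw [ht1 n, hkdef]
          simp only [List.length_append, List.length_replicate]
          omega
        have hm1 : (t n).length + k < (t (n+1)).length := by omega
        have hWm : W ((t n).length + k) = U n := by
          rw [hWeq hm1, ht1 n, List.getD_eq_getElem _ _ (by rw [← ht1 n]; exact hm1),
            List.getElem_append_right (by omega), List.getElem_replicate]
        have hhist : hist W ((t n).length + k) = t n ++ List.replicate k (U n) := by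
          apply PP.hist_eq _ _ Set.univ _ (by simp)
          intro i hi
          simp only [List.length_append, List.length_replicate] at hi
          have hi' : i < (t (n+1)).length := by omega
          rw [hWeq hi', ht1 n, List.getD_eq_getElem _ _ (by rw [← ht1 n]; exact hi'),
            List.getD_eq_getElem _ _ (by simp only [List.length_append, List.length_replicate]; omega)]
          rcases Nat.lt_or_ge i (t n).length with h | h
          · rw [List.getElem_append_left h, List.getElem_append_left h]
          · rw [List.getElem_append_right h, List.getElem_append_right h,
              List.getElem_replicate, List.getElem_replicate]
        rw [hhist, hWm, ← (hUspec n).2, PP.resp]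
      rw [mapClusterPt_iff_frequently] at hnc
      push_neg at hnc
      obtain ⟨o, ho𝓝, hoev⟩ := hnc
      rw [Filter.eventually_atTop] at hoev
      obtain ⟨N, hN⟩ := hoev
      have hbo : ∀ n, N ≤ n → b n ∉ o := by
        intro n hn
        rw [hkey n]
        have h1 : n ≤ (t n).length := PP.simT_len (x := x) (σ := σ) b n
        exact hN _ (by omega)
      -- final contradiction
      obtain ⟨o', ho'o, ho', hxo'⟩ := mem_nhds_iff.mp ho𝓝
      have hsplit : x ∈ closure (b '' Set.Iio N) ∪ closure (b '' Set.Ici N) := by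
        rw [← closure_union, ← Set.image_union, Set.Iio_union_Ici, Set.image_univ]
        exact hcl
      rcases hsplit with h | h
      · have himg : b '' Set.Iio N = ⋃ i ∈ Set.Iio N, {b i} := by
          ext y
          simp [Set.mem_image, eq_comm]
        rw [himg, Set.Finite.closure_biUnion (Set.finite_Iio N)] at h
        obtain ⟨i, _, hi2⟩ := Set.mem_iUnion₂.mp h
        exact hbK i hi2
      · rw [mem_closure_iff] at h
        obtain ⟨y, hy1, n, hn, rfl⟩ := h o' ho' hxo'
        exact hbo n hn (ho'o hy1)

end PPProof
end

section
/- Let X be a topological space and x ∈ X. Then each of the following implies the next: (a) player I has a winning predetermined strategy in the selection game G1(D_X, Ω_{X,x}); (b) player II has a winning Markov strategy in the closure game CL(X,x); (c) player II has a winning Markov strategy in Gruenhage's clustering game at x; (d) player I has a winning predetermined strategy in the selection game G1(Ω_{X,x}, Ω_{X,x}). -/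
open Set Filter Topology

/-- For a topological space `X` and `x ∈ X`, each of the following
implies the next: (a) I has a winning predetermined strategy in `G1(D_X, Ω_{X,x})`;
(b) II has a winning Markov strategy in the closure game `CL(X,x)`;
(c) II has a winning Markov strategy in Gruenhage's clustering game at `x`;
(d) I has a winning predetermined strategy in `G1(Ω_{X,x}, Ω_{X,x})`. -/
theorem point_picking_limited_information_implication_chain
    (X : Type*) [TopologicalSpace X] (x : X) :
    (IPredetWinsG1 {D : Set X | Dense D} {A : Set X | x ∈ closure A} →
      IIMarkovWinsCL X x) ∧
    (IIMarkovWinsCL X x → IIMarkovWinsGruCluster X x) ∧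
    (IIMarkovWinsGruCluster X x →
      IPredetWinsG1 {A : Set X | x ∈ closure A} {A : Set X | x ∈ closure A}) := by
  refine ⟨?_, ?_, ?_⟩
  · -- (a) → (b)
    rintro ⟨σ, hdense, hwin⟩
    classical
    refine ⟨fun U n => if h : (U ∩ σ n).Nonempty then h.choose else x, fun U hU => ?_⟩
    have hne : ∀ n, (U n ∩ σ n).Nonempty := fun n =>
      (hdense n).inter_open_nonempty (U n) (hU n).1 (hU n).2
    have hmem : ∀ n, (if h : (U n ∩ σ n).Nonempty then h.choose else x) ∈ U n ∩ σ n := by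
      intro n
      rw [dif_pos (hne n)]
      exact (hne n).choose_spec
    exact ⟨fun n => (hmem n).1, hwin _ fun n => (hmem n).2⟩
  · -- (b) → (c)
    rintro ⟨σ, hwin⟩
    refine ⟨σ, fun U hU => ?_⟩
    have hU' : ∀ n, IsOpen (U n) ∧ (U n).Nonempty := fun n => ⟨(hU n).1, ⟨x, (hU n).2⟩⟩
    obtain ⟨hleg, hcl⟩ := hwin U hU'
    refine ⟨hleg, fun hclu => hcl ?_⟩
    rw [mem_closure_iff]
    intro o ho hxo
    obtain ⟨n, -, hn⟩ := (Filter.frequently_atTop.mp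
      (mapClusterPt_iff_frequently.mp hclu o (ho.mem_nhds hxo))) 0
    exact ⟨_, hn, ⟨n, rfl⟩⟩
  · -- (c) → (d)
    rintro ⟨σ, hwin⟩
    classical
    set a : ℕ → Set X := fun n =>
      {y | (∃ U k, IsOpen U ∧ x ∈ U ∧ y = σ U (Nat.pair n k)) ∧ x ∉ closure {y}} with ha
    refine ⟨a, fun n => ?_, ?_⟩
    · -- x ∈ closure (a n)
      rw [Set.mem_setOf_eq, mem_closure_iff]
      intro V hV hxV
      by_contra hemp
      -- every legal point in V produced at a pair-(n,·) round has x in its closure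
      have hcon : ∀ (U : Set X) (k : ℕ), IsOpen U → x ∈ U → σ U (Nat.pair n k) ∈ V →
          x ∈ closure {σ U (Nat.pair n k)} := by
        intro U k hUo hxU hmemV
        by_contra hncl
        exact hemp ⟨_, hmemV, ⟨U, k, hUo, hxU, rfl⟩, hncl⟩
      -- play V at pair-(n,·) rounds, univ elsewhere
      set W : ℕ → Set X := fun m => if (Nat.unpair m).1 = n then V else Set.univ with hW
      have hWleg : ∀ m, IsOpen (W m) ∧ x ∈ W m := by
        intro m
        by_cases h : (Nat.unpair m).1 = n <;> simp [hW, h, hV, hxV]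
      obtain ⟨hleg, hncl⟩ := hwin W hWleg
      apply hncl
      rw [mapClusterPt_iff_frequently]
      intro s hs
      rw [Filter.frequently_atTop]
      intro M
      refine ⟨Nat.pair n M, Nat.right_le_pair n M, ?_⟩
      have hWp : W (Nat.pair n M) = V := by simp [hW, Nat.unpair_pair]
      have hmemV : σ (W (Nat.pair n M)) (Nat.pair n M) ∈ V := by
        have := hleg (Nat.pair n M); rwa [hWp] at this ⊢
      have hxcl : x ∈ closure {σ (W (Nat.pair n M)) (Nat.pair n M)} := by
        rw [hWp] at hmemV ⊢
        exact hcon V M hV hxV hmemV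
      obtain ⟨y, hy1, hy2⟩ := mem_closure_iff.mp hxcl (interior s) isOpen_interior
        (mem_interior_iff_mem_nhds.mpr hs)
      rw [Set.mem_singleton_iff] at hy2
      exact hy2 ▸ interior_subset hy1
    · -- winning
      intro b hb
      have hbn : ∀ n, (∃ U k, IsOpen U ∧ x ∈ U ∧ b n = σ U (Nat.pair n k)) ∧
          x ∉ closure {b n} := fun n => hb n
      choose V k hVo hxV hbV using fun n => (hbn n).1
      have hbncl : ∀ n, x ∉ closure {b n} := fun n => (hbn n).2
      set m : ℕ → ℕ := fun n => Nat.pair n (k n) with hm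
      set W : ℕ → Set X := fun j => if h : ∃ n, j = m n then V h.choose else Set.univ
        with hW
      have hWleg : ∀ j, IsOpen (W j) ∧ x ∈ W j := by
        intro j
        by_cases h : ∃ n, j = m n
        · simp only [hW, dif_pos h]; exact ⟨hVo _, hxV _⟩
        · simp [hW, dif_neg h]
      have hWm : ∀ n, W (m n) = V n := by
        intro n
        have h : ∃ n', m n = m n' := ⟨n, rfl⟩
        have : h.choose = n := by
          have := h.choose_spec
          exact (Nat.pair_eq_pair.mp this.symm).1
        simp only [hW, dif_pos h, this]
      obtain ⟨hleg, hncl⟩ := hwin W hWleg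
      rw [mapClusterPt_iff_frequently] at hncl
      push_neg at hncl
      obtain ⟨s, hs, hfreq⟩ := hncl
      rw [← Filter.not_frequently, Filter.frequently_atTop] at hfreq
      push_neg at hfreq
      obtain ⟨N, hN⟩ := hfreq
      -- b n ∉ s for all n ≥ N
      have hbs : ∀ n, N ≤ n → b n ∉ s := by
        intro n hn
        have hmn : N ≤ m n := le_trans hn (Nat.left_le_pair n (k n))
        have := hN (m n) hmn
        rwa [hWm n, ← hbV n] at this
      -- for n < N, pick open nbhds missing b n
      have hsmall : ∀ n, ∃ P, IsOpen P ∧ x ∈ P ∧ b n ∉ P := by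
        intro n
        have := hbncl n
        rw [mem_closure_iff] at this
        push_neg at this
        obtain ⟨P, hPo, hxP, hPe⟩ := this
        refine ⟨P, hPo, hxP, fun hbP => ?_⟩
        have : b n ∈ P ∩ {b n} := ⟨hbP, rfl⟩
        rw [hPe] at this
        exact this
      choose P hPo hxP hbP using hsmall
      -- the witness open set
      set O : Set X := interior s ∩ ⋂ n ∈ Finset.range N, P n with hO
      have hOo : IsOpen O := isOpen_interior.inter
        (isOpen_biInter_finset fun n _ => hPo n)
      have hxO : x ∈ O := ⟨mem_interior_iff_mem_nhds.mpr hs,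
        Set.mem_biInter fun n _ => hxP n⟩
      intro hcl
      rw [Set.mem_setOf_eq, mem_closure_iff] at hcl
      obtain ⟨y, hyO, n, rfl⟩ := hcl O hOo hxO
      rcases lt_or_ge n N with h | h
      · exact hbP n (Set.mem_iInter₂.mp hyO.2 n (Finset.mem_range.mpr h))
      · exact hbs n h (interior_subset hyO.1)
end

section
/- Let X be a completely regular Hausdorff (T3.5) space. If player II has a winning Markov strategy in the game ΩFO(X), then player II has a winning Markov strategy in the discrete selection game CD(Cp(X)). -/
open Set Filter Topology

section AuxLemmas

lemma aux_closedDiscrete {Y : Type*} [TopologicalSpace Y] [T1Space Y]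
    (S : Set Y) (h : ∀ y : Y, ∃ V : Set Y, IsOpen V ∧ y ∈ V ∧ (V ∩ S).Finite) :
    IsClosedDiscrete S := by
  constructor
  · rw [← isOpen_compl_iff, isOpen_iff_forall_mem_open]
    intro y hy
    exact let ⟨V, hVo, hyV, hfin⟩ := h y
      ⟨V \ (V ∩ S), fun z hz => fun hzS => hz.2 ⟨hz.1, hzS⟩,
        hVo.sdiff hfin.isClosed, hyV, fun hyS => hy hyS.2⟩
  · intro y hy
    obtain ⟨V, hVo, hyV, hfin⟩ := h y
    refine ⟨V \ ((V ∩ S) \ {y}), hVo.sdiff ((hfin.subset diff_subset).isClosed), ?_⟩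
    ext z
    constructor
    · rintro ⟨⟨hzV, hz2⟩, hzS⟩
      by_contra hne
      exact hz2 ⟨⟨hzV, hzS⟩, hne⟩
    · rintro rfl
      exact ⟨⟨hyV, fun hc => hc.2 rfl⟩, hy⟩

lemma aux_bump {X : Type*} [TopologicalSpace X] [T35Space X]
    (F : Finset X) (W : Set X) (hW : IsOpen W) (hFW : ↑F ⊆ W) :
    ∃ ψ : X → ℝ, Continuous ψ ∧ (∀ x ∈ F, ψ x = 0) ∧ (∀ x ∉ W, ψ x = 1) := by
  have key : ∀ x ∈ F, ∃ f : X → ℝ, Continuous f ∧ f x = 0 ∧ ∀ z ∉ W, f z = 1 := by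
    intro x hx
    obtain ⟨f, hf, hfx, hfK⟩ := CompletelyRegularSpace.completely_regular x Wᶜ
      hW.isClosed_compl (fun hc => hc (hFW hx))
    exact ⟨fun z => (f z : ℝ), continuous_subtype_val.comp hf,
      by simp [hfx], fun z hz => by simpa using congrArg Subtype.val (hfK hz)⟩
  choose! φ hφc hφ0 hφ1 using key
  refine ⟨fun z => ∏ x ∈ F, φ x z, continuous_finset_prod _ (fun x hx => hφc x hx), ?_, ?_⟩
  · intro x hx
    exact Finset.prod_eq_zero hx (hφ0 x hx)
  · intro z hz
    exact Finset.prod_eq_one fun x hx => hφ1 x hx z hz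

lemma aux_exists_reply {X : Type*} [TopologicalSpace X] [T35Space X]
    (σ : Finset X → ℕ → Set X)
    (hσ : ∀ F n, IsOpen (σ F n) ∧ ↑F ⊆ σ F n)
    (U : Set (Cp X)) (hU : IsOpen U) (hne : U.Nonempty) (n : ℕ) :
    ∃ g : Cp X, g ∈ U ∧ ∃ F : Finset X, ∀ x ∉ σ F n, g.1 x = (n : ℝ) := by
  obtain ⟨f, hf⟩ := hne
  obtain ⟨V, hVo, hVU⟩ := (isOpen_induced_iff (f := (Subtype.val : Cp X → X → ℝ))).mp hU
  have hfV : f.1 ∈ V := by rw [← hVU] at hf; exact hf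
  obtain ⟨I, u, hIu, hpi⟩ := isOpen_pi_iff.mp hVo f.1 hfV
  obtain ⟨ψ, hψc, hψ0, hψ1⟩ := aux_bump I (σ I n) (hσ I n).1 (hσ I n).2
  set g : X → ℝ := fun x => f.1 x + ((n : ℝ) - f.1 x) * ψ x with hg
  have hgc : Continuous g := f.2.add (((continuous_const.sub f.2)).mul hψc)
  refine ⟨⟨g, hgc⟩, ?_, I, ?_⟩
  · rw [← hVU]
    apply hpi
    intro a ha
    show g a ∈ u a
    have : g a = f.1 a := by simp [hg, hψ0 a ha]
    rw [this]
    exact (hIu a ha).2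
  · intro x hx
    show g x = (n : ℝ)
    simp only [hg]
    rw [hψ1 x hx]
    ring

end AuxLemmas

/-- For a T3.5 space `X`, if II has a winning Markov strategy in
`ΩFO(X)`, then II has a winning Markov strategy in the discrete selection game
`CD(Cp(X))`. -/
theorem II_markov_wins_omegaFO_implies_II_markov_wins_CD_Cp
    (X : Type*) [TopologicalSpace X] [T35Space X]
    (h : IIMarkovWinsOmegaFO X) :
    IIMarkovWinsCD (Cp X) := by
  classical
  obtain ⟨σ, hσ, hσwin⟩ := h
  haveI : T1Space (Cp X) := inferInstanceAs (T1Space {f : X → ℝ // Continuous f})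
  refine ⟨fun U n => if hE : ∃ g : Cp X, g ∈ U ∧ ∃ F : Finset X, ∀ x ∉ σ F n, g.1 x = (n : ℝ)
    then hE.choose else Cp.zero X, ?_⟩
  intro U hleg
  have hE : ∀ n, ∃ g : Cp X, g ∈ U n ∧ ∃ F : Finset X, ∀ x ∉ σ F n, g.1 x = (n : ℝ) :=
    fun n => aux_exists_reply σ hσ (U n) (hleg n).1 (hleg n).2 n
  have hyeq : ∀ n, (if hE' : ∃ g : Cp X, g ∈ U n ∧ ∃ F : Finset X, ∀ x ∉ σ F n, g.1 x = (n : ℝ)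
      then hE'.choose else Cp.zero X) = (hE n).choose := fun n => dif_pos (hE n)
  set y : ℕ → Cp X := fun n => (hE n).choose with hy
  have hyU : ∀ n, y n ∈ U n := fun n => (hE n).choose_spec.1
  choose F hF using fun n => (hE n).choose_spec.2
  have hlose := hσwin F
  have hstar : ∃ Fs : Finset X, ∀ n, ∃ x ∈ Fs, x ∉ σ (F n) n := by
    by_contra hc
    push_neg at hc
    apply hlose
    refine ⟨⟨?_, ?_⟩, ?_⟩
    · rintro V ⟨n, rfl⟩
      exact (hσ (F n) n).1
    · ext x
      simp only [mem_sUnion, mem_univ, iff_true]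
      obtain ⟨n, hn⟩ := hc {x}
      exact ⟨σ (F n) n, ⟨n, rfl⟩, hn x (Finset.mem_singleton_self x)⟩
    · intro G
      obtain ⟨n, hn⟩ := hc G
      exact ⟨σ (F n) n, ⟨n, rfl⟩, fun x hx => hn x hx⟩
  obtain ⟨Fs, hFs⟩ := hstar
  have hFsne : Fs.Nonempty := by
    obtain ⟨x, hx, -⟩ := hFs 0
    exact ⟨x, hx⟩
  have hval : ∀ n, ∃ x ∈ Fs, (y n).1 x = (n : ℝ) := by
    intro n
    obtain ⟨x, hx, hxW⟩ := hFs n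
    exact ⟨x, hx, hF n x hxW⟩
  have hev : ∀ x : X, Continuous fun g : Cp X => g.1 x :=
    fun x => (continuous_apply x).comp continuous_subtype_val
  have hcd : IsClosedDiscrete (Set.range y) := by
    apply aux_closedDiscrete
    intro h'
    set M : ℝ := Fs.sup' hFsne (fun x => h'.1 x) with hM
    refine ⟨⋂ x ∈ Fs, (fun g : Cp X => g.1 x) ⁻¹' (Iio (M + 1)), ?_, ?_, ?_⟩
    · exact isOpen_biInter_finset fun x _ => (isOpen_Iio).preimage (hev x)
    · simp only [mem_iInter, mem_preimage, mem_Iio]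
      intro x hx
      have := Finset.le_sup' (fun x => h'.1 x) hx
      linarith
    · apply Set.Finite.subset ((Finset.range ⌈M + 1⌉₊).finite_toSet.image y)
      rintro g ⟨hgV, n, rfl⟩
      obtain ⟨x, hx, hxv⟩ := hval n
      simp only [mem_iInter, mem_preimage, mem_Iio] at hgV
      have hn : (n : ℝ) < M + 1 := hxv ▸ hgV x hx
      exact ⟨n, by simpa using Nat.lt_ceil.mpr hn, rfl⟩
  constructor
  · intro n
    show (if hE' : ∃ g : Cp X, g ∈ U n ∧ ∃ F : Finset X, ∀ x ∉ σ F n, g.1 x = (n : ℝ)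
        then hE'.choose else Cp.zero X) ∈ U n
    rw [hyeq n]
    exact hyU n
  · have : (Set.range fun n => (if hE' : ∃ g : Cp X, g ∈ U n ∧ ∃ F : Finset X,
        ∀ x ∉ σ F n, g.1 x = (n : ℝ) then hE'.choose else Cp.zero X)) = Set.range y := by
      apply congrArg
      funext n
      exact hyeq n
    show IsClosedDiscrete (Set.range fun n => if hE' : ∃ g : Cp X, g ∈ U n ∧
        ∃ F : Finset X, ∀ x ∉ σ F n, g.1 x = (n : ℝ) then hE'.choose else Cp.zero X)
    rw [this]
    exact hcd
end
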